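/- Let W = ⟨L, t | [t,a] = d(a) for a ∈ A⟩ be an HNN-extension of Lie algebras over a field k, where A ≤ L is a subalgebra and d : A → L is a derivation. Then there is a short exact sequence of right U(W)-modules 0 → k ⊗_{U(A)} U(W) → k ⊗_{U(L)} U(W) → k → 0, where the first map sends 1⊗λ to 1⊗tλ and the second is induced by the augmentation. -/

import Mathlib

universe u

open FreeLieAlgebra UniversalEnvelopingAlgebra

attribute [local instance 100] LieRing.ofAssociativeRing

variable (k : Type u) [Field k] (L : Type u) [LieRing L] [LieAlgebra k L]
variable (A : LieSubalgebra k L) (d : A →ₗ[k] L)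

/-- The generators of the presentation of the HNN-extension
`W = ⟨L, t | [t,a] = d(a), a ∈ A⟩`: one generator for each element of `L`. -/
noncomputable def hnnGen (x : L) : FreeLieAlgebra k (L ⊕ Unit) := of k (Sum.inl x)

/-- The generator corresponding to the stable letter `t`. -/
noncomputable def hnnTGen : FreeLieAlgebra k (L ⊕ Unit) := of k (Sum.inr ())

noncomputable def hnnRel : Set (FreeLieAlgebra k (L ⊕ Unit)) :=
  {y | ∃ (c : k) (x₁ x₂ : L),
      y = hnnGen k L (c • x₁ + x₂) - c • hnnGen k L x₁ - hnnGen k L x₂} ∪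
  {y | ∃ x₁ x₂ : L, y = hnnGen k L ⁅x₁, x₂⁆ - ⁅hnnGen k L x₁, hnnGen k L x₂⁆} ∪
  {y | ∃ a : A, y = ⁅hnnTGen k L, hnnGen k L (a : L)⁆ - hnnGen k L (d a)}

/-- The HNN-extension `W = ⟨L, t | [t,a] = d(a) for a ∈ A⟩` of Lie algebras. -/
noncomputable def HNN : Type u :=
  FreeLieAlgebra k (L ⊕ Unit) ⧸ LieSubmodule.lieSpan k (FreeLieAlgebra k (L ⊕ Unit)) (hnnRel k L A d)

noncomputable instance : LieRing (HNN k L A d) := by unfold HNN; infer_instance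
noncomputable instance : LieAlgebra k (HNN k L A d) := by unfold HNN; infer_instance

/-- The canonical (Lie-algebra) map `L → W`. -/
noncomputable def hnnOf (x : L) : HNN k L A d :=
  LieSubmodule.Quotient.mk' _ (of k (Sum.inl x))

/-- The stable letter `t ∈ W`. -/
noncomputable def hnnT : HNN k L A d :=
  LieSubmodule.Quotient.mk' _ (of k (Sum.inr ()))

/-- `k ⊗_{U(A)} U(W)`, realised (in the mirror left-module convention) as the quotient of
`U(W)` by the submodule generated by the image of `A`. -/
noncomputable def NA : Submodule (UniversalEnvelopingAlgebra k (HNN k L A d))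
    (UniversalEnvelopingAlgebra k (HNN k L A d)) :=
  Submodule.span _ {u | ∃ a : A, u = ι k (hnnOf k L A d (a : L))}

/-- `k ⊗_{U(L)} U(W)`, realised as the quotient of `U(W)` by the submodule generated by the
image of `L`. -/
noncomputable def NL : Submodule (UniversalEnvelopingAlgebra k (HNN k L A d))
    (UniversalEnvelopingAlgebra k (HNN k L A d)) :=
  Submodule.span _ {u | ∃ x : L, u = ι k (hnnOf k L A d x)}

theorem uea_induction {R : Type*} {L : Type*} [CommRing R] [LieRing L] [LieAlgebra R L]
    {P : UniversalEnvelopingAlgebra R L → Prop}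
    (halg : ∀ r, P (algebraMap R _ r))
    (hι : ∀ x, P (ι R x))
    (hmul : ∀ a b, P a → P b → P (a * b))
    (hadd : ∀ a b, P a → P b → P (a + b)) :
    ∀ u, P u := by
  intro u
  obtain ⟨a, rfl⟩ : ∃ a, UniversalEnvelopingAlgebra.mkAlgHom R L a = u := RingCon.mkₐ_surjective _ u
  induction a using TensorAlgebra.induction with
  | algebraMap r => rw [AlgHom.commutes]; exact halg r
  | ι x => exact hι x
  | mul a b ha hb => rw [map_mul]; exact hmul _ _ ha hb
  | add a b ha hb => rw [map_add]; exact hadd _ _ ha hb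

theorem freeLie_mem {R X : Type*} [CommRing R] (S : LieSubalgebra R (FreeLieAlgebra R X))
    (h : ∀ x, of R x ∈ S) (z : FreeLieAlgebra R X) : z ∈ S := by
  let f : X → S := fun x => ⟨of R x, h x⟩
  have key : (S.incl.comp (FreeLieAlgebra.lift R f)) = (FreeLieAlgebra.lift R (of R)) := by
    apply FreeLieAlgebra.hom_ext
    intro x
    simp [f, lift_of_apply]
  have id_eq : FreeLieAlgebra.lift R (of R) z = z := by
    have : FreeLieAlgebra.lift R (of R) = (LieHom.id : FreeLieAlgebra R X →ₗ⁅R⁆ _) := by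
      apply FreeLieAlgebra.hom_ext; intro x; simp [lift_of_apply]
    rw [this]; rfl
  have := LieHom.congr_fun key z
  rw [id_eq] at this
  rw [← this]
  exact (FreeLieAlgebra.lift R f z).2


-- basic quotient lemmas
noncomputable def hnnMk : FreeLieAlgebra k (L ⊕ Unit) → HNN k L A d :=
  fun z => Submodule.Quotient.mk z

lemma hnnMk_surjective : Function.Surjective (hnnMk k L A d) :=
  Submodule.Quotient.mk_surjective _

lemma hnnMk_add (a b : FreeLieAlgebra k (L ⊕ Unit)) :
    hnnMk k L A d (a + b) = hnnMk k L A d a + hnnMk k L A d b := rfl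

lemma hnnMk_smul (c : k) (a : FreeLieAlgebra k (L ⊕ Unit)) :
    hnnMk k L A d (c • a) = c • hnnMk k L A d a := rfl

lemma hnnMk_bracket (a b : FreeLieAlgebra k (L ⊕ Unit)) :
    hnnMk k L A d ⁅a, b⁆ = ⁅hnnMk k L A d a, hnnMk k L A d b⁆ := rfl

lemma hnnMk_sub (a b : FreeLieAlgebra k (L ⊕ Unit)) :
    hnnMk k L A d (a - b) = hnnMk k L A d a - hnnMk k L A d b := rfl

lemma hnnMk_rel {y : FreeLieAlgebra k (L ⊕ Unit)} (hy : y ∈ hnnRel k L A d) :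
    hnnMk k L A d y = 0 := by
  have h : y ∈ LieSubmodule.lieSpan k (FreeLieAlgebra k (L ⊕ Unit)) (hnnRel k L A d) :=
    LieSubmodule.subset_lieSpan hy
  exact (Submodule.Quotient.mk_eq_zero _).mpr h

lemma hnnOf_smul_add (c : k) (x₁ x₂ : L) :
    hnnOf k L A d (c • x₁ + x₂) = c • hnnOf k L A d x₁ + hnnOf k L A d x₂ := by
  have h := hnnMk_rel k L A d (y := hnnGen k L (c • x₁ + x₂) - c • hnnGen k L x₁ - hnnGen k L x₂)
    (Or.inl (Or.inl ⟨c, x₁, x₂, rfl⟩))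
  rw [show hnnMk k L A d (hnnGen k L (c • x₁ + x₂) - c • hnnGen k L x₁ - hnnGen k L x₂)
      = hnnOf k L A d (c • x₁ + x₂) - c • hnnOf k L A d x₁ - hnnOf k L A d x₂ from rfl] at h
  have := sub_eq_zero.mp h
  linear_combination (norm := module) this

lemma hnnOf_lie (x₁ x₂ : L) :
    hnnOf k L A d ⁅x₁, x₂⁆ = ⁅hnnOf k L A d x₁, hnnOf k L A d x₂⁆ := by
  have h := hnnMk_rel k L A d
    (y := hnnGen k L ⁅x₁, x₂⁆ - ⁅hnnGen k L x₁, hnnGen k L x₂⁆)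
    (Or.inl (Or.inr ⟨x₁, x₂, rfl⟩))
  rw [show hnnMk k L A d (hnnGen k L ⁅x₁, x₂⁆ - ⁅hnnGen k L x₁, hnnGen k L x₂⁆)
      = hnnOf k L A d ⁅x₁, x₂⁆ - ⁅hnnOf k L A d x₁, hnnOf k L A d x₂⁆ from rfl] at h
  exact sub_eq_zero.mp h

lemma hnnT_lie (a : A) :
    ⁅hnnT k L A d, hnnOf k L A d (a : L)⁆ = hnnOf k L A d (d a) := by
  have h := hnnMk_rel k L A d
    (y := ⁅hnnTGen k L, hnnGen k L (a : L)⁆ - hnnGen k L (d a)) (Or.inr ⟨a, rfl⟩)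
  rw [show hnnMk k L A d (⁅hnnTGen k L, hnnGen k L (a : L)⁆ - hnnGen k L (d a))
      = ⁅hnnT k L A d, hnnOf k L A d (a : L)⁆ - hnnOf k L A d (d a) from rfl] at h
  exact sub_eq_zero.mp h

lemma hnnOf_zero : hnnOf k L A d 0 = 0 := by
  have h := hnnOf_smul_add k L A d 1 0 0
  simp only [smul_zero, add_zero, one_smul] at h
  linear_combination (norm := module) h.symm

lemma hnnOf_add (x₁ x₂ : L) :
    hnnOf k L A d (x₁ + x₂) = hnnOf k L A d x₁ + hnnOf k L A d x₂ := by
  have h := hnnOf_smul_add k L A d 1 x₁ x₂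
  simpa using h

lemma hnnOf_smul (c : k) (x : L) : hnnOf k L A d (c • x) = c • hnnOf k L A d x := by
  have h := hnnOf_smul_add k L A d c x 0
  rw [add_zero, hnnOf_zero, add_zero] at h
  exact h

lemma hnn_mem (S : LieSubalgebra k (HNN k L A d))
    (hL : ∀ x : L, hnnOf k L A d x ∈ S) (ht : hnnT k L A d ∈ S) (w : HNN k L A d) :
    w ∈ S := by
  obtain ⟨z, rfl⟩ := hnnMk_surjective k L A d w
  let T : LieSubalgebra k (FreeLieAlgebra k (L ⊕ Unit)) :=
    { carrier := {z | hnnMk k L A d z ∈ S}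
      add_mem' := fun {a b} ha hb => by
        simp only [Set.mem_setOf_eq, hnnMk_add] at *
        exact S.add_mem ha hb
      zero_mem' := by
        have : hnnMk k L A d 0 = 0 := rfl
        simp only [Set.mem_setOf_eq, this]
        exact S.zero_mem
      smul_mem' := fun c a ha => by
        simp only [Set.mem_setOf_eq, hnnMk_smul] at *
        exact S.smul_mem c ha
      lie_mem' := fun {a b} ha hb => by
        simp only [Set.mem_setOf_eq, hnnMk_bracket] at *
        exact S.lie_mem ha hb }
  have : z ∈ T := freeLie_mem T (by
    rintro (x | ⟨⟩)
    · exact hL x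
    · exact ht) z
  exact this



section Rep

local notation "Uk" => UniversalEnvelopingAlgebra k (HNN k L A d)
local notation "Mq" => Uk ⧸ NA k L A d
local notation "Vk" => (Uk ⧸ NA k L A d) × k

/-- Multiplication action on the first factor. -/
noncomputable def Fop (u : Uk) : Module.End k Vk :=
  { toFun := fun p => (u • p.1, 0)
    map_add' := fun p q => Prod.ext (smul_add u p.1 q.1) (add_zero 0).symm
    map_smul' := fun c p => Prod.ext (smul_comm u c p.1) (smul_zero c).symm }

@[simp] lemma Fop_apply (u : Uk) (p : Vk) : Fop k L A d u p = (u • p.1, 0) := rfl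

lemma Fop_add (u v : Uk) : Fop k L A d (u + v) = Fop k L A d u + Fop k L A d v :=
  LinearMap.ext fun p => Prod.ext (add_smul u v p.1) (add_zero 0).symm

lemma Fop_smul (c : k) (u : Uk) : Fop k L A d (c • u) = c • Fop k L A d u :=
  LinearMap.ext fun p => Prod.ext (smul_assoc c u p.1) (smul_zero c).symm

lemma Fop_mul (u v : Uk) : Fop k L A d (u * v) = Fop k L A d u * Fop k L A d v :=
  LinearMap.ext fun p => Prod.ext (mul_smul u v p.1) rfl

lemma Fop_sub (u v : Uk) : Fop k L A d (u - v) = Fop k L A d u - Fop k L A d v :=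
  LinearMap.ext fun p => Prod.ext (sub_smul u v p.1) (sub_zero 0).symm

lemma Fop_lie (u v : Uk) : Fop k L A d ⁅u, v⁆ = ⁅Fop k L A d u, Fop k L A d v⁆ := by
  rw [Ring.lie_def, Ring.lie_def, Fop_sub, Fop_mul, Fop_mul]

/-- The cocycle part: sends `(m, c)` to `(c • mk 1, 0)`. -/
noncomputable def Jop : Module.End k Vk :=
  { toFun := fun p => (p.2 • (Submodule.Quotient.mk 1 : Mq), 0)
    map_add' := fun p q => Prod.ext (add_smul p.2 q.2 _) (add_zero 0).symm
    map_smul' := fun c p => Prod.ext (smul_assoc c p.2 _) (smul_zero c).symm }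

@[simp] lemma Jop_apply (p : Vk) :
    Jop k L A d p = (p.2 • (Submodule.Quotient.mk 1 : Mq), 0) := rfl

noncomputable def hnnGenMap : (L ⊕ Unit) → Module.End k Vk :=
  Sum.elim (fun x => Fop k L A d (ι k (hnnOf k L A d x)))
    (fun _ => Fop k L A d (ι k (hnnT k L A d)) + Jop k L A d)

noncomputable def rhoFree : FreeLieAlgebra k (L ⊕ Unit) →ₗ⁅k⁆ Module.End k Vk :=
  FreeLieAlgebra.lift k (hnnGenMap k L A d)

lemma rhoFree_gen (x : L) :
    rhoFree k L A d (hnnGen k L x) = Fop k L A d (ι k (hnnOf k L A d x)) := by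
  rw [hnnGen, rhoFree, lift_of_apply]; rfl

lemma rhoFree_t :
    rhoFree k L A d (hnnTGen k L)
      = Fop k L A d (ι k (hnnT k L A d)) + Jop k L A d := by
  rw [hnnTGen, rhoFree, lift_of_apply]; rfl

lemma rhoFree_rel {y : FreeLieAlgebra k (L ⊕ Unit)} (hy : y ∈ hnnRel k L A d) :
    rhoFree k L A d y = 0 := by
  rcases hy with (⟨c, x₁, x₂, rfl⟩ | ⟨x₁, x₂, rfl⟩) | ⟨a, rfl⟩
  · rw [map_sub, map_sub, map_smul, rhoFree_gen, rhoFree_gen, rhoFree_gen,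
      hnnOf_smul_add, map_add, map_smul, Fop_add, Fop_smul]
    abel
  · rw [map_sub, LieHom.map_lie, rhoFree_gen, rhoFree_gen, rhoFree_gen,
      hnnOf_lie, LieHom.map_lie, Fop_lie]
    abel
  · rw [map_sub, LieHom.map_lie, rhoFree_gen, rhoFree_gen, rhoFree_t,
      ← hnnT_lie k L A d a, LieHom.map_lie, Fop_lie]
    have h1 : Jop k L A d * Fop k L A d (ι k (hnnOf k L A d (a : L))) = 0 := by
      refine LinearMap.ext fun p => ?_
      show ((0:k) • (Submodule.Quotient.mk 1 : Mq), (0:k)) = 0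
      rw [zero_smul]; rfl
    have h2 : Fop k L A d (ι k (hnnOf k L A d (a : L))) * Jop k L A d = 0 := by
      refine LinearMap.ext fun p => ?_
      show ((ι k (hnnOf k L A d (a : L))) • (p.2 • (Submodule.Quotient.mk 1 : Mq)), (0:k)) = 0
      have hz : (ι k (hnnOf k L A d (a : L))) • (Submodule.Quotient.mk 1 : Mq) = 0 := by
        rw [← Submodule.Quotient.mk_smul, smul_eq_mul, mul_one]
        exact (Submodule.Quotient.mk_eq_zero _).mpr (Submodule.subset_span ⟨a, rfl⟩)
      rw [smul_comm, hz, smul_zero]; rfl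
    have hJ : ⁅Jop k L A d, Fop k L A d (ι k (hnnOf k L A d (a : L)))⁆ = 0 := by
      rw [Ring.lie_def, h1, h2, sub_zero]
    rw [add_lie, hJ, add_zero]
    abel

end Rep

section Rep2

local notation "Uk" => UniversalEnvelopingAlgebra k (HNN k L A d)
local notation "Mq" => Uk ⧸ NA k L A d
local notation "Vk" => (Uk ⧸ NA k L A d) × k

lemma hker : (LieSubmodule.lieSpan k (FreeLieAlgebra k (L ⊕ Unit))
    (hnnRel k L A d)).toSubmodule ≤ LinearMap.ker (rhoFree k L A d).toLinearMap := by
  intro z hz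
  rw [LieSubmodule.mem_toSubmodule] at hz
  have hle : LieSubmodule.lieSpan k (FreeLieAlgebra k (L ⊕ Unit)) (hnnRel k L A d)
      ≤ (rhoFree k L A d).ker :=
    (LieSubmodule.lieSpan_le).mpr (fun y hy => LieHom.mem_ker.mpr (rhoFree_rel k L A d hy))
  exact LinearMap.mem_ker.mpr (LieHom.mem_ker.mp (hle hz))

noncomputable def rhoLin : HNN k L A d →ₗ[k] Module.End k Vk :=
  Submodule.liftQ _ (rhoFree k L A d).toLinearMap (hker k L A d)

lemma rhoLin_mk (z : FreeLieAlgebra k (L ⊕ Unit)) :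
    rhoLin k L A d (hnnMk k L A d z) = rhoFree k L A d z := rfl

noncomputable def rho : HNN k L A d →ₗ⁅k⁆ Module.End k Vk :=
  { rhoLin k L A d with
    map_lie' := by
      intro x y
      obtain ⟨z₁, rfl⟩ := hnnMk_surjective k L A d x
      obtain ⟨z₂, rfl⟩ := hnnMk_surjective k L A d y
      show rhoLin k L A d ⁅hnnMk k L A d z₁, hnnMk k L A d z₂⁆ = _
      rw [← hnnMk_bracket, rhoLin_mk, LieHom.map_lie]
      rfl }

lemma rho_mk (z : FreeLieAlgebra k (L ⊕ Unit)) :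
    rho k L A d (hnnMk k L A d z) = rhoFree k L A d z := rfl

lemma rho_of (x : L) :
    rho k L A d (hnnOf k L A d x) = Fop k L A d (ι k (hnnOf k L A d x)) :=
  (rho_mk k L A d (hnnGen k L x)).trans (rhoFree_gen k L A d x)

lemma rho_t :
    rho k L A d (hnnT k L A d)
      = Fop k L A d (ι k (hnnT k L A d)) + Jop k L A d :=
  (rho_mk k L A d (hnnTGen k L)).trans (rhoFree_t k L A d)

lemma rho_fst (w : HNN k L A d) (m : Mq) :
    rho k L A d w (m, 0) = ((ι k w : Uk) • m, 0) := by
  let S : LieSubalgebra k (HNN k L A d) :=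
    { carrier := {w | ∀ m : Mq, rho k L A d w (m, 0) = ((ι k w : Uk) • m, 0)}
      zero_mem' := by
        intro m
        have h0 : rho k L A d (0 : HNN k L A d) = 0 := by
          rw [← zero_smul k (0 : HNN k L A d), map_smul, zero_smul]
        have h1 : (ι k (0 : HNN k L A d) : Uk) = 0 := by
          rw [← zero_smul k (0 : HNN k L A d), map_smul, zero_smul]
        rw [h0, h1, zero_smul]
        rfl
      add_mem' := fun {a b} ha hb m => by
        rw [map_add, LinearMap.add_apply, ha m, hb m, map_add, add_smul]
        exact Prod.ext rfl (add_zero 0)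
      smul_mem' := fun c a ha m => by
        rw [map_smul, LinearMap.smul_apply, ha m, map_smul, smul_assoc]
        exact Prod.ext rfl (smul_zero c)
      lie_mem' := fun {a b} ha hb m => by
        rw [LieHom.map_lie, Ring.lie_def, LinearMap.sub_apply, Module.End.mul_apply,
          Module.End.mul_apply, ha m, hb m, ha _, hb _, LieHom.map_lie, Ring.lie_def, sub_smul,
          mul_smul, mul_smul]
        exact Prod.ext rfl (sub_zero 0) }
  have hw : w ∈ S := by
    apply hnn_mem k L A d S
    · intro x m'
      rw [rho_of]
      rfl
    · intro m'
      rw [rho_t, LinearMap.add_apply, Fop_apply, Jop_apply]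
      refine Prod.ext ?_ ?_
      · show (ι k (hnnT k L A d) : Uk) • m' + (0:k) • (Submodule.Quotient.mk 1 : Mq)
            = (ι k (hnnT k L A d) : Uk) • m'
        rw [zero_smul, add_zero]
      · show (0:k) + (0:k) = (0:k)
        rw [add_zero]
  exact hw m

end Rep2

section Rep3

local notation "Uk" => UniversalEnvelopingAlgebra k (HNN k L A d)
local notation "Mq" => Uk ⧸ NA k L A d
local notation "Vk" => (Uk ⧸ NA k L A d) × k

noncomputable def Pmap : Uk →ₐ[k] Module.End k Vk :=
  UniversalEnvelopingAlgebra.lift k (rho k L A d)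

lemma Pmap_ι (w : HNN k L A d) : Pmap k L A d (ι k w) = rho k L A d w :=
  UniversalEnvelopingAlgebra.lift_ι_apply k (rho k L A d) w

lemma Pmap_fst (u : Uk) (m : Mq) : Pmap k L A d u (m, 0) = (u • m, 0) := by
  induction u using uea_induction generalizing m with
  | halg r =>
    rw [AlgHom.commutes, Module.algebraMap_end_apply, algebraMap_smul]
    exact Prod.ext rfl (smul_zero r)
  | hι w => rw [Pmap_ι, rho_fst]
  | hmul a b ha hb =>
    rw [map_mul, Module.End.mul_apply, hb, ha, mul_smul]
  | hadd a b ha hb =>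
    rw [map_add, LinearMap.add_apply, ha, hb, add_smul]
    exact Prod.ext rfl (add_zero 0)

lemma Pmap_NL {n : Uk} (hn : n ∈ NL k L A d) :
    Pmap k L A d n ((0 : Mq), (1 : k)) = 0 := by
  induction hn using Submodule.span_induction with
  | mem u hu =>
    obtain ⟨x, rfl⟩ := hu
    rw [Pmap_ι, rho_of, Fop_apply, smul_zero]
    rfl
  | zero => rw [map_zero]; rfl
  | add u v _ _ hu hv => rw [map_add, LinearMap.add_apply, hu, hv, add_zero]
  | smul u n _ hn =>
    rw [smul_eq_mul, map_mul, Module.End.mul_apply, hn, map_zero]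

lemma key_inj (u : Uk) (h : u * ι k (hnnT k L A d) ∈ NL k L A d) : u ∈ NA k L A d := by
  have h1 : Pmap k L A d (u * ι k (hnnT k L A d)) ((0 : Mq), (1 : k)) = 0 := Pmap_NL k L A d h
  have h2 : Pmap k L A d (ι k (hnnT k L A d)) ((0 : Mq), (1 : k))
      = ((Submodule.Quotient.mk 1 : Mq), (0:k)) := by
    rw [Pmap_ι, rho_t, LinearMap.add_apply, Fop_apply, Jop_apply, smul_zero, one_smul]
    exact Prod.ext (zero_add _) (zero_add 0)
  rw [map_mul, Module.End.mul_apply, h2, Pmap_fst] at h1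
  have h3 : u • (Submodule.Quotient.mk 1 : Mq) = Submodule.Quotient.mk u := by
    rw [← Submodule.Quotient.mk_smul, smul_eq_mul, mul_one]
  rw [h3] at h1
  have h4 : (Submodule.Quotient.mk u : Mq) = 0 := congrArg Prod.fst h1
  exact (Submodule.Quotient.mk_eq_zero _).mp h4

end Rep3

section Aug

local notation "Uk" => UniversalEnvelopingAlgebra k (HNN k L A d)

noncomputable def epsA : Uk →ₐ[k] k :=
  UniversalEnvelopingAlgebra.lift k (0 : HNN k L A d →ₗ⁅k⁆ k)

lemma epsA_ι (w : HNN k L A d) : epsA k L A d (ι k w) = 0 :=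
  UniversalEnvelopingAlgebra.lift_ι_apply k (0 : HNN k L A d →ₗ⁅k⁆ k) w

lemma epsA_algebraMap (r : k) : epsA k L A d (algebraMap k Uk r) = r := by
  rw [AlgHom.commutes]; exact Algebra.algebraMap_self_apply r

lemma epsA_NL {n : Uk} (hn : n ∈ NL k L A d) : epsA k L A d n = 0 := by
  induction hn using Submodule.span_induction with
  | mem u hu => obtain ⟨x, rfl⟩ := hu; exact epsA_ι k L A d _
  | zero => exact map_zero _
  | add u v _ _ hu hv => rw [map_add, hu, hv, add_zero]
  | smul u n _ hn => rw [smul_eq_mul, map_mul, hn, mul_zero]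

/-- The left ideal generated by `ι t` together with `NL`. -/
noncomputable def Itau : Submodule Uk Uk :=
  Submodule.span Uk {ι k (hnnT k L A d)} ⊔ NL k L A d

lemma ι_mem_Itau (w : HNN k L A d) : ι k w ∈ Itau k L A d := by
  let S : LieSubalgebra k (HNN k L A d) :=
    { carrier := {w | (ι k w : Uk) ∈ Itau k L A d}
      zero_mem' := by
        have h1 : (ι k (0 : HNN k L A d) : Uk) = 0 := by
          rw [← zero_smul k (0 : HNN k L A d), map_smul, zero_smul]
        show (ι k (0 : HNN k L A d) : Uk) ∈ Itau k L A d
        rw [h1]; exact Submodule.zero_mem _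
      add_mem' := fun {a b} ha hb => by
        show (ι k (a + b) : Uk) ∈ Itau k L A d
        rw [map_add]; exact Submodule.add_mem _ ha hb
      smul_mem' := fun c a ha => by
        show (ι k (c • a) : Uk) ∈ Itau k L A d
        rw [map_smul]
        rw [← algebraMap_smul Uk c (ι k a : Uk)]
        exact Submodule.smul_mem _ _ ha
      lie_mem' := fun {a b} ha hb => by
        show (ι k ⁅a, b⁆ : Uk) ∈ Itau k L A d
        rw [LieHom.map_lie, Ring.lie_def]
        refine Submodule.sub_mem _ ?_ ?_
        · rw [← smul_eq_mul]; exact Submodule.smul_mem _ _ hb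
        · rw [← smul_eq_mul]; exact Submodule.smul_mem _ _ ha }
  apply hnn_mem k L A d S
  · intro x
    show (ι k (hnnOf k L A d x) : Uk) ∈ Itau k L A d
    exact Submodule.mem_sup_right (Submodule.subset_span ⟨x, rfl⟩)
  · show (ι k (hnnT k L A d) : Uk) ∈ Itau k L A d
    exact Submodule.mem_sup_left (Submodule.subset_span rfl)

lemma sub_eps_mem (u : Uk) :
    u - algebraMap k Uk (epsA k L A d u) ∈ Itau k L A d := by
  induction u using uea_induction with
  | halg r => rw [epsA_algebraMap, sub_self]; exact Submodule.zero_mem _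
  | hι w => rw [epsA_ι, map_zero, sub_zero]; exact ι_mem_Itau k L A d w
  | hmul a b ha hb =>
    have hc : a * algebraMap k Uk (epsA k L A d b) = algebraMap k Uk (epsA k L A d b) * a :=
      (Algebra.commutes _ _).symm
    have key : a * b - algebraMap k Uk (epsA k L A d (a * b))
        = a * (b - algebraMap k Uk (epsA k L A d b))
          + algebraMap k Uk (epsA k L A d b) * (a - algebraMap k Uk (epsA k L A d a)) := by
      have h1 : epsA k L A d (a * b) = epsA k L A d a * epsA k L A d b := map_mul _ _ _
      have h2 : algebraMap k Uk (epsA k L A d b) * algebraMap k Uk (epsA k L A d a)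
          = algebraMap k Uk (epsA k L A d a * epsA k L A d b) := by
        rw [← map_mul, mul_comm]
      rw [h1, mul_sub, mul_sub, hc, h2]
      abel
    rw [key]
    refine Submodule.add_mem _ ?_ ?_
    · rw [← smul_eq_mul]; exact Submodule.smul_mem _ _ hb
    · rw [← smul_eq_mul]; exact Submodule.smul_mem _ _ ha
  | hadd a b ha hb =>
    have key : a + b - algebraMap k Uk (epsA k L A d (a + b))
        = (a - algebraMap k Uk (epsA k L A d a)) + (b - algebraMap k Uk (epsA k L A d b)) := by
      rw [map_add, map_add]; abel
    rw [key]
    exact Submodule.add_mem _ ha hb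

end Aug

section Maps

local notation "Uk" => UniversalEnvelopingAlgebra k (HNN k L A d)

noncomputable def mulT : Uk →ₗ[Uk] Uk ⧸ NL k L A d where
  toFun u := Submodule.Quotient.mk (u * ι k (hnnT k L A d))
  map_add' u v := by
    show Submodule.Quotient.mk ((u + v) * ι k (hnnT k L A d)) = _
    rw [add_mul, Submodule.Quotient.mk_add]
  map_smul' r u := by
    show Submodule.Quotient.mk ((r * u) * ι k (hnnT k L A d)) = _
    rw [mul_assoc, ← smul_eq_mul, Submodule.Quotient.mk_smul]
    rfl

lemma NA_le_ker_mulT : NA k L A d ≤ LinearMap.ker (mulT k L A d) := by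
  rw [NA, Submodule.span_le]
  rintro _ ⟨a, rfl⟩
  rw [SetLike.mem_coe, LinearMap.mem_ker]
  show Submodule.Quotient.mk (ι k (hnnOf k L A d (a : L)) * ι k (hnnT k L A d)) = 0
  rw [Submodule.Quotient.mk_eq_zero]
  have hlie : (ι k (hnnT k L A d) : Uk) * ι k (hnnOf k L A d (a : L))
      - ι k (hnnOf k L A d (a : L)) * ι k (hnnT k L A d) = ι k (hnnOf k L A d (d a)) := by
    rw [← Ring.lie_def, ← LieHom.map_lie, hnnT_lie]
  have heq : ι k (hnnOf k L A d (a : L)) * ι k (hnnT k L A d)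
      = (ι k (hnnT k L A d) : Uk) • ι k (hnnOf k L A d (a : L)) - ι k (hnnOf k L A d (d a)) := by
    rw [smul_eq_mul, ← hlie]; abel
  rw [heq]
  refine Submodule.sub_mem _ ?_ ?_
  · exact Submodule.smul_mem _ _ (Submodule.subset_span ⟨(a : L), rfl⟩)
  · exact Submodule.subset_span ⟨d a, rfl⟩

noncomputable def alphaMap :
    (Uk ⧸ NA k L A d) →ₗ[Uk] (Uk ⧸ NL k L A d) :=
  Submodule.liftQ _ (mulT k L A d) (NA_le_ker_mulT k L A d)

lemma alphaMap_mk (u : Uk) :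
    alphaMap k L A d (Submodule.Quotient.mk u)
      = Submodule.Quotient.mk (u * ι k (hnnT k L A d)) := rfl

noncomputable def betaLin : (Uk ⧸ (NL k L A d).restrictScalars k) →ₗ[k] k :=
  Submodule.liftQ ((NL k L A d).restrictScalars k) (epsA k L A d).toLinearMap
    (fun _ hn => LinearMap.mem_ker.mpr (epsA_NL k L A d hn))

noncomputable def betaMap : (Uk ⧸ NL k L A d) →+ k :=
  ((betaLin k L A d).comp
    (Submodule.Quotient.restrictScalarsEquiv k (NL k L A d)).symm.toLinearMap).toAddMonoidHom

lemma betaMap_mk (u : Uk) :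
    betaMap k L A d (Submodule.Quotient.mk u) = epsA k L A d u := by
  show betaLin k L A d ((Submodule.Quotient.restrictScalarsEquiv k (NL k L A d)).symm
      (Submodule.Quotient.mk u)) = _
  rw [Submodule.Quotient.restrictScalarsEquiv_symm_mk, betaLin, Submodule.liftQ_apply]
  rfl

end Maps


/-- The short exact sequence of `U(W)`-modules associated with a Lie algebra HNN-extension
`W = ⟨L, t | [t,a] = d(a), a ∈ A⟩`:
`0 → k ⊗_{U(A)} U(W) → k ⊗_{U(L)} U(W) → k → 0`,
where the first map is (the mirror image of) `1 ⊗ λ ↦ 1 ⊗ tλ` and the second is induced by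
the augmentation `ε : U(W) → k`.  Hypothesis: `d` is a derivation of `A` with values in `L`. -/
theorem hnn_shortExactSequence
    (hd : ∀ a b : A, d ⁅a, b⁆ = ⁅(a : L), d b⁆ + ⁅d a, (b : L)⁆) :
    ∃ (α : (UniversalEnvelopingAlgebra k (HNN k L A d) ⧸ NA k L A d)
          →ₗ[UniversalEnvelopingAlgebra k (HNN k L A d)]
          (UniversalEnvelopingAlgebra k (HNN k L A d) ⧸ NL k L A d))
      (β : (UniversalEnvelopingAlgebra k (HNN k L A d) ⧸ NL k L A d) →+ k),
      (∀ u : UniversalEnvelopingAlgebra k (HNN k L A d),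
        α (Submodule.Quotient.mk u) = Submodule.Quotient.mk (u * ι k (hnnT k L A d))) ∧
      (∀ u : UniversalEnvelopingAlgebra k (HNN k L A d),
        β (Submodule.Quotient.mk u) =
          (UniversalEnvelopingAlgebra.lift k (0 : HNN k L A d →ₗ⁅k⁆ k)) u) ∧
      Function.Injective α ∧
      (∀ m, β m = 0 ↔ ∃ n, α n = m) ∧
      Function.Surjective β := by
  refine ⟨alphaMap k L A d, betaMap k L A d, alphaMap_mk k L A d, betaMap_mk k L A d, ?_, ?_, ?_⟩
  · -- injectivity
    have hker0 : ∀ n, alphaMap k L A d n = 0 → n = 0 := by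
      intro n hn
      obtain ⟨u, rfl⟩ := Submodule.Quotient.mk_surjective _ n
      rw [alphaMap_mk] at hn
      have hmem : u * ι k (hnnT k L A d) ∈ NL k L A d :=
        (Submodule.Quotient.mk_eq_zero _).mp hn
      exact (Submodule.Quotient.mk_eq_zero _).mpr (key_inj k L A d u hmem)
    intro n₁ n₂ h
    have h0 : alphaMap k L A d (n₁ - n₂) = 0 := by rw [map_sub, h, sub_self]
    exact sub_eq_zero.mp (hker0 _ h0)
  · -- exactness
    intro m
    obtain ⟨u, rfl⟩ := Submodule.Quotient.mk_surjective _ m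
    constructor
    · intro hb
      rw [betaMap_mk] at hb
      have hu : u ∈ Itau k L A d := by
        have := sub_eps_mem k L A d u
        rw [hb, map_zero, sub_zero] at this
        exact this
      rw [Itau, Submodule.mem_sup] at hu
      obtain ⟨s, hs, n, hn, rfl⟩ := hu
      rw [Submodule.mem_span_singleton] at hs
      obtain ⟨v, rfl⟩ := hs
      refine ⟨Submodule.Quotient.mk v, ?_⟩
      rw [alphaMap_mk, Submodule.Quotient.mk_add, (Submodule.Quotient.mk_eq_zero _).mpr hn,
        add_zero]
      rw [smul_eq_mul]
    · rintro ⟨n, hn⟩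
      obtain ⟨v, rfl⟩ := Submodule.Quotient.mk_surjective _ n
      rw [← hn, alphaMap_mk, betaMap_mk, map_mul, epsA_ι, mul_zero]
  · -- surjectivity
    intro c
    refine ⟨Submodule.Quotient.mk (algebraMap k _ c), ?_⟩
    rw [betaMap_mk, epsA_algebraMap]
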